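/- Let A be a finite left brace of order p²q, where p and q are primes with q > p+1, and let A_q be the q-primary component of the additive group A⁺. Then A_q is contained in Soc(A) = {a : ∀b, a·b = 0}, and A_q is the unique Sylow q-subgroup of the adjoint group A∘ and is normal in A∘. -/

import Mathlib

/-- A left brace multiplication on an additive abelian group. -/
structure LeftBraceMul (A : Type*) [AddCommGroup A] where
  mul : A → A → A
  add_distrib : ∀ a b c : A, mul a (b + c) = mul a b + mul a c
  comp : ∀ a b c : A, mul (mul a b + a + b) c = mul a (mul b c) + mul a c + mul b c
  bij : ∀ a : A, Function.Bijective (fun x => mul a x + x)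

namespace StmtAux

variable {A : Type*} [AddCommGroup A]

theorem mulz (Br : LeftBraceMul A) (a : A) : Br.mul a 0 = 0 := by
  have h := Br.add_distrib a 0 0
  rw [add_zero] at h
  have h2 : Br.mul a 0 + 0 = Br.mul a 0 + Br.mul a 0 := by rw [add_zero]; exact h
  exact (add_left_cancel h2).symm

theorem zmul (Br : LeftBraceMul A) (c : A) : Br.mul 0 c = 0 := by
  have h := Br.comp 0 0 c
  rw [mulz Br 0, zero_add, zero_add] at h
  have h2 : Br.mul 0 (Br.mul 0 c) + Br.mul 0 c = Br.mul 0 0 + 0 := by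
    rw [mulz Br 0, add_zero]
    have h3 : Br.mul 0 (Br.mul 0 c) + Br.mul 0 c + Br.mul 0 c - Br.mul 0 c
        = Br.mul 0 c - Br.mul 0 c := by rw [← h]
    simpa using h3
  exact (Br.bij 0).1 h2

/-- The lambda map of a brace, as an additive automorphism. -/
noncomputable def lamE (Br : LeftBraceMul A) (a : A) : A ≃+ A :=
  { Equiv.ofBijective _ (Br.bij a) with
    map_add' := fun x y => by
      show Br.mul a (x + y) + (x + y) = (Br.mul a x + x) + (Br.mul a y + y)
      rw [Br.add_distrib]; abel }

theorem lamE_apply (Br : LeftBraceMul A) (a x : A) : lamE Br a x = Br.mul a x + x := rfl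

theorem lamE_op (Br : LeftBraceMul A) (a b x : A) :
    lamE Br (a + b + Br.mul a b) x = lamE Br a (lamE Br b x) := by
  simp only [lamE_apply, Br.add_distrib]
  have h2 : a + b + Br.mul a b = Br.mul a b + a + b := by abel
  rw [h2, Br.comp]
  abel

/-- The adjoint group of a brace, as a type synonym. -/
def Adj {A : Type*} [AddCommGroup A] (_ : LeftBraceMul A) : Type _ := A

variable (Br : LeftBraceMul A)

/-- adjoint operation -/
def op (a b : A) : A := a + b + Br.mul a b

/-- adjoint right inverse -/
noncomputable def rinv (a : A) : A := (lamE Br a).symm (-a)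

theorem op_assoc (a b c : A) : op Br (op Br a b) c = op Br a (op Br b c) := by
  show op Br (a + b + Br.mul a b) c = op Br a (b + c + Br.mul b c)
  unfold op
  have h2 : a + b + Br.mul a b = Br.mul a b + a + b := by abel
  rw [h2, Br.comp, Br.add_distrib, Br.add_distrib]
  abel

theorem op_zero (a : A) : op Br a 0 = a := by unfold op; rw [mulz]; abel

theorem zero_op (a : A) : op Br 0 a = a := by unfold op; rw [zmul]; abel

theorem op_rinv (a : A) : op Br a (rinv Br a) = 0 := by
  unfold op
  have h : a + rinv Br a + Br.mul a (rinv Br a)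
      = a + (Br.mul a (rinv Br a) + rinv Br a) := by abel
  rw [h, ← lamE_apply]
  unfold rinv
  rw [AddEquiv.apply_symm_apply]
  abel

theorem rinv_op (a : A) : op Br (rinv Br a) a = 0 := by
  calc op Br (rinv Br a) a
      = op Br (op Br (rinv Br a) a) (op Br (rinv Br a) (rinv Br (rinv Br a))) := by
        rw [op_rinv, op_zero]
    _ = op Br (op Br (op Br (rinv Br a) a) (rinv Br a)) (rinv Br (rinv Br a)) := by
        rw [op_assoc Br (op Br (rinv Br a) a) (rinv Br a) (rinv Br (rinv Br a))]
    _ = op Br (op Br (rinv Br a) (op Br a (rinv Br a))) (rinv Br (rinv Br a)) := by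
        rw [op_assoc Br (rinv Br a) a (rinv Br a)]
    _ = op Br (rinv Br a) (rinv Br (rinv Br a)) := by rw [op_rinv, op_zero]
    _ = 0 := op_rinv Br _

/-- zero as element of the adjoint group -/
def zeroAdj : Adj Br := (0 : A)

instance : Mul (Adj Br) := ⟨fun a b => (op Br a b : A)⟩
instance : One (Adj Br) := ⟨zeroAdj Br⟩
noncomputable instance : Inv (Adj Br) := ⟨fun a => (rinv Br a : A)⟩

theorem adj_mul_def (a b : Adj Br) : a * b = (op Br a b : A) := rfl
theorem adj_one_def : (1 : Adj Br) = zeroAdj Br := rfl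
theorem adj_inv_def (a : Adj Br) : a⁻¹ = (rinv Br a : A) := rfl

noncomputable instance : Group (Adj Br) where
  mul := (· * ·)
  one := 1
  inv := Inv.inv
  mul_assoc := op_assoc Br
  one_mul := zero_op Br
  mul_one := op_zero Br
  inv_mul_cancel := rinv_op Br

instance [Fintype A] : Fintype (Adj Br) := inferInstanceAs (Fintype A)

theorem lamE_adj_mul (a b : Adj Br) (x : A) :
    lamE Br (a * b : Adj Br) x = lamE Br a (lamE Br b x) := lamE_op Br a b x

theorem lamE_pow (a : Adj Br) : ∀ (n : ℕ) (x : A),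
    lamE Br (a ^ n : Adj Br) x = (⇑(lamE Br a))^[n] x := by
  intro n
  induction n with
  | zero =>
      intro x
      rw [pow_zero]
      show lamE Br ((0 : A)) x = x
      rw [lamE_apply, zmul, zero_add]
  | succ n ih =>
      intro x
      rw [pow_succ']
      rw [lamE_adj_mul, ih, Function.iterate_succ_apply']

theorem count_fixed {α : Type*} [Finite α] {q : ℕ} (hq : q.Prime) (σ : α ≃ α)
    (hσ : ∀ x : α, σ^[q] x = x) :
    Nat.card α ≡ Nat.card {x : α // σ x = x} [MOD q] := by
  classical
  haveI : Fact q.Prime := ⟨hq⟩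
  haveI : NeZero q := ⟨hq.ne_zero⟩
  haveI : Fact (1 < q) := ⟨hq.one_lt⟩
  have hpow : ∀ (n : ℕ) (x : α), (σ ^ n) x = σ^[n] x := by
    intro n
    induction n with
    | zero => intro x; rfl
    | succ n ih =>
        intro x
        rw [pow_succ, Equiv.Perm.mul_apply, ih, ← Function.iterate_succ_apply]
  have hq1 : σ ^ q = 1 := by
    ext x
    rw [hpow]
    exact hσ x
  let φ : Multiplicative (ZMod q) →* Equiv.Perm α :=
    { toFun := fun g => σ ^ (Multiplicative.toAdd g).val
      map_one' := by
        show σ ^ (Multiplicative.toAdd (1 : Multiplicative (ZMod q))).val = 1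
        rw [toAdd_one, ZMod.val_zero, pow_zero]
      map_mul' := fun g h => by
        show σ ^ (Multiplicative.toAdd (g * h)).val
            = σ ^ (Multiplicative.toAdd g).val * σ ^ (Multiplicative.toAdd h).val
        rw [toAdd_mul, ZMod.val_add, ← pow_eq_pow_mod _ hq1, pow_add] }
  letI act : MulAction (Multiplicative (ZMod q)) α := MulAction.compHom α φ
  haveI pg : IsPGroup q (Multiplicative (ZMod q)) := IsPGroup.of_card (n := 1) (by
    rw [Nat.card_eq_fintype_card]
    simp [ZMod.card])
  have key := pg.card_modEq_card_fixedPoints α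
  have hset : MulAction.fixedPoints (Multiplicative (ZMod q)) α = {x : α | σ x = x} := by
    ext x
    simp only [MulAction.mem_fixedPoints, Set.mem_setOf_eq]
    constructor
    · intro h
      have h1 := h (Multiplicative.ofAdd (1 : ZMod q))
      have h2 : (Multiplicative.ofAdd (1 : ZMod q)) • x
          = σ ^ (Multiplicative.toAdd (Multiplicative.ofAdd (1 : ZMod q))).val • x := rfl
      rw [h2] at h1
      rw [toAdd_ofAdd, ZMod.val_one, pow_one] at h1
      exact h1
    · intro hx g
      have hit : ∀ n : ℕ, σ^[n] x = x := by
        intro n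
        induction n with
        | zero => rfl
        | succ n ih => rw [Function.iterate_succ_apply', ih, hx]
      show (φ g) • x = x
      show (σ ^ (Multiplicative.toAdd g).val) x = x
      rw [hpow]
      exact hit _
  rw [hset] at key
  exact key

/-- cast into the adjoint group -/
def adjOf {A : Type*} [AddCommGroup A] (Br : LeftBraceMul A) (a : A) : Adj Br := a

theorem op_eq_add_lam {A : Type*} [AddCommGroup A] (Br : LeftBraceMul A) (a b : A) :
    op Br a b = a + lamE Br a b := by
  rw [lamE_apply]
  show a + b + Br.mul a b = a + (Br.mul a b + b)
  abel

end StmtAux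

open StmtAux in
/-- In a left brace of order p²q with q > p+1, the q-primary component A_q of
the additive group lies in the socle and is the unique Sylow q-subgroup of the
adjoint group, which is moreover normal. -/
theorem stmt_17 {A : Type*} [AddCommGroup A] [Fintype A] (Br : LeftBraceMul A)
    (p q : ℕ) (hp : p.Prime) (hq : q.Prime) (hqp : q > p + 1)
    (hcard : Fintype.card A = p ^ 2 * q) :
    (∀ a : A, (∃ n : ℕ, q ^ n • a = 0) → ∀ b : A, Br.mul a b = 0) ∧
    Nat.card {a : A | ∃ n : ℕ, q ^ n • a = 0} = q ∧
    (∀ H : Set A, (0 : A) ∈ H →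
      (∀ a ∈ H, ∀ b ∈ H, a + b + Br.mul a b ∈ H) → Nat.card H = q →
      H = {a : A | ∃ n : ℕ, q ^ n • a = 0}) ∧
    (∀ a : A, ∀ b ∈ {a : A | ∃ n : ℕ, q ^ n • a = 0},
      ∃ c ∈ {a : A | ∃ n : ℕ, q ^ n • a = 0},
        a + b + Br.mul a b = c + a + Br.mul c a) := by
  classical
  haveI : Fact q.Prime := ⟨hq⟩
  haveI : Fact p.Prime := ⟨hp⟩
  set S : Set A := {a : A | ∃ n : ℕ, q ^ n • a = 0} with hSdef
  have hq2 : 2 ≤ q := hq.two_le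
  have hp2 : 2 ≤ p := hp.two_le
  have key_le : ∀ (x : A) (n m : ℕ), n ≤ m → q ^ n • x = 0 → q ^ m • x = 0 := by
    intro x n m hnm h
    have hqm : q ^ m = q ^ (m - n) * q ^ n := by rw [← pow_add]; congr 1; omega
    rw [hqm, mul_smul, h, smul_zero]
  -- the q-primary component, as an additive subgroup
  let Sq : AddSubgroup A :=
    { carrier := S
      zero_mem' := ⟨0, by simp⟩
      add_mem' := by
        rintro a b ⟨n, hn⟩ ⟨m, hm⟩
        exact ⟨max n m, by
          rw [smul_add, key_le a n _ (le_max_left n m) hn,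
            key_le b m _ (le_max_right n m) hm, add_zero]⟩
      neg_mem' := by
        rintro a ⟨n, hn⟩
        exact ⟨n, by rw [smul_neg, hn, neg_zero]⟩ }
  -- lambda maps preserve S
  have lam_mem : ∀ a x : A, x ∈ S → lamE Br a x ∈ S := by
    rintro a x ⟨n, hn⟩
    exact ⟨n, by rw [← map_nsmul, hn, map_zero]⟩
  -- the q-primary component as a subgroup of the adjoint group
  let Nq : Subgroup (Adj Br) :=
    { carrier := S
      one_mem' := show (0 : A) ∈ S from ⟨0, by simp⟩
      mul_mem' := by
        intro a b ha hb
        show op Br a b ∈ S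
        erw [op_eq_add_lam]
        exact Sq.add_mem ha (lam_mem a b hb)
      inv_mem' := by
        rintro a ⟨n, hn⟩
        show rinv Br a ∈ S
        exact ⟨n, by
          unfold rinv
          erw [← map_nsmul, smul_neg, hn, neg_zero, map_zero]⟩ }
  have hmemNq : ∀ x : A, (x : Adj Br) ∈ Nq ↔ x ∈ S := fun x => Iff.rfl
  -- cardinality bookkeeping
  have hcardA : Nat.card A = p ^ 2 * q := by rw [Nat.card_eq_fintype_card, hcard]
  have hcardAdj : Nat.card (Adj Br) = p ^ 2 * q := by
    rw [← hcardA]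
    exact Nat.card_congr ⟨fun x => x, fun x => x, fun _ => rfl, fun _ => rfl⟩
  have hcard_Sq_S : Nat.card Sq = Nat.card S :=
    Nat.card_congr ⟨fun x => ⟨x.1, x.2⟩, fun x => ⟨x.1, x.2⟩, fun _ => rfl, fun _ => rfl⟩
  have hcard_Nq_S : Nat.card Nq = Nat.card S :=
    Nat.card_congr ⟨fun x => ⟨x.1, x.2⟩, fun x => ⟨x.1, x.2⟩, fun _ => rfl, fun _ => rfl⟩
  -- an element of additive order q
  obtain ⟨x0, hx0⟩ := exists_prime_addOrderOf_dvd_card q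
    (show q ∣ Fintype.card A by rw [hcard]; exact dvd_mul_left q (p ^ 2))
  have hx0S : x0 ∈ Sq := ⟨1, by rw [pow_one, ← hx0]; exact addOrderOf_nsmul_eq_zero x0⟩
  have hqdvdSq : q ∣ Nat.card Sq := by
    rw [← hx0]
    exact AddSubgroup.addOrderOf_dvd_natCard Sq hx0S
  -- every prime dividing |Sq| is q
  have hdivSq : ∀ r : ℕ, r.Prime → r ∣ Nat.card Sq → r = q := by
    intro r hr hrd
    haveI : Fact r.Prime := ⟨hr⟩
    haveI : Fintype ↥Sq := Fintype.ofFinite _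
    rw [Nat.card_eq_fintype_card] at hrd
    obtain ⟨x, hx⟩ := exists_prime_addOrderOf_dvd_card r hrd
    have hcoe : addOrderOf (x : A) = r := by rw [← hx]; exact AddSubgroup.addOrderOf_coe x
    obtain ⟨n, hn⟩ := x.2
    have hdd : addOrderOf (x : A) ∣ q ^ n := addOrderOf_dvd_of_nsmul_eq_zero hn
    rw [hcoe] at hdd
    exact (Nat.prime_dvd_prime_iff_eq hr hq).mp (hr.dvd_of_dvd_pow hdd)
  -- |Sq| = q
  have hSqcard : Nat.card Sq = q := by
    have hdvd : Nat.card Sq ∣ p ^ 2 * q := by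
      rw [← hcardA]; exact AddSubgroup.card_addSubgroup_dvd_card Sq
    obtain ⟨e, he⟩ := hqdvdSq
    have hedvd : e ∣ p ^ 2 := by
      have h2 : q * e ∣ q * p ^ 2 := by
        rw [← he]
        rw [mul_comm q (p ^ 2)]
        exact hdvd
      exact (mul_dvd_mul_iff_left (by omega : q ≠ 0)).mp h2
    by_cases he1 : e = 1
    · rw [he, he1, mul_one]
    · exfalso
      have hrp := Nat.minFac_prime he1
      have h1 : e.minFac ∣ Nat.card Sq := by
        rw [he]; exact (Nat.minFac_dvd e).mul_left q
      have heq := hdivSq e.minFac hrp h1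
      have h2 : e.minFac ∣ p ^ 2 := (Nat.minFac_dvd e).trans hedvd
      rw [heq] at h2
      have h3 := hq.dvd_of_dvd_pow h2
      have := Nat.le_of_dvd (by omega) h3
      omega
  have hNqcard : Nat.card Nq = q := by rw [hcard_Nq_S, ← hcard_Sq_S, hSqcard]
  have hScard : Nat.card S = q := by rw [← hcard_Sq_S, hSqcard]
  -- the p-primary part
  let Sp : AddSubgroup A :=
    { carrier := {x : A | p ^ 2 • x = 0}
      zero_mem' := by simp
      add_mem' := by
        intro a b ha hb
        show p ^ 2 • (a + b) = 0
        rw [smul_add, ha, hb, add_zero]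
      neg_mem' := by
        intro a ha
        show p ^ 2 • (-a) = 0
        rw [smul_neg, ha, neg_zero] }
  have hSpdvd : Nat.card Sp ∣ p ^ 2 := by
    have hdvd : Nat.card Sp ∣ p ^ 2 * q := by
      rw [← hcardA]; exact AddSubgroup.card_addSubgroup_dvd_card Sp
    have hqnd : ¬ q ∣ Nat.card Sp := by
      intro hqd
      haveI : Fintype ↥Sp := Fintype.ofFinite _
      rw [Nat.card_eq_fintype_card] at hqd
      obtain ⟨x, hx⟩ := exists_prime_addOrderOf_dvd_card q hqd
      have hcoe : addOrderOf (x : A) = q := by rw [← hx]; exact AddSubgroup.addOrderOf_coe x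
      have hdd : addOrderOf (x : A) ∣ p ^ 2 := addOrderOf_dvd_of_nsmul_eq_zero x.2
      rw [hcoe] at hdd
      have h3 := hq.dvd_of_dvd_pow hdd
      have := Nat.le_of_dvd (by omega) h3
      omega
    have hco : (Nat.card Sp).Coprime q := ((hq.coprime_iff_not_dvd).mpr hqnd).symm
    exact hco.dvd_of_dvd_mul_right hdvd
  -- whole-group annihilator
  have hA0 : ∀ a : A, ((p : ℤ) ^ 2 * (q : ℤ)) • a = 0 := by
    intro a
    have h1 : ((p ^ 2 * q : ℕ) : ℤ) • a = 0 := by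
      rw [natCast_zsmul, ← hcard]
      exact card_nsmul_eq_zero
    rw [show ((p : ℤ) ^ 2 * (q : ℤ)) = ((p ^ 2 * q : ℕ) : ℤ) by push_cast; ring]
    exact h1
  have hns : ∀ (n : ℕ) (x : A), n • x = (n : ℤ) • x := fun n x => (natCast_zsmul x n).symm
  -- decomposition A = Sp + Sq
  have hdecomp : ∀ a : A, ∃ x ∈ Sp, ∃ y ∈ S, a = x + y := by
    have hco : IsCoprime (p ^ 2 : ℤ) (q : ℤ) := by
      have hpc : Nat.Coprime (p ^ 2) q :=
        Nat.Coprime.pow_left 2 ((Nat.coprime_primes hp hq).mpr (by omega))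
      exact_mod_cast Nat.isCoprime_iff_coprime.mpr hpc
    obtain ⟨u, v, huv⟩ := hco
    intro a
    refine ⟨v • ((q : ℤ) • a), ?_, u • (((p : ℤ) ^ 2) • a), ?_, ?_⟩
    · show p ^ 2 • (v • ((q : ℤ) • a)) = 0
      rw [hns (p ^ 2), smul_smul, smul_smul,
        show (((p ^ 2 : ℕ) : ℤ) * v) * (q : ℤ) = v * ((p : ℤ) ^ 2 * (q : ℤ)) by push_cast; ring,
        ← smul_smul, hA0, smul_zero]
    · refine ⟨1, ?_⟩
      rw [pow_one, hns q, smul_smul, smul_smul,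
        show (((q : ℕ) : ℤ) * u) * ((p : ℤ) ^ 2) = u * ((p : ℤ) ^ 2 * (q : ℤ)) by push_cast; ring,
        ← smul_smul, hA0, smul_zero]
    · calc a = ((u * (p : ℤ) ^ 2 + v * (q : ℤ))) • a := by rw [huv, one_smul]
        _ = u • (((p : ℤ) ^ 2) • a) + v • ((q : ℤ) • a) := by
            rw [add_smul, mul_smul, mul_smul]
        _ = v • ((q : ℤ) • a) + u • (((p : ℤ) ^ 2) • a) := by abel
  -- |Sp| = p²
  have hSpcard : Nat.card Sp = p ^ 2 := by
    have hsurj : Function.Surjective (fun z : Sp × Sq => (z.1 : A) + (z.2 : A)) := by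
      intro a
      obtain ⟨x, hx, y, hy, rfl⟩ := hdecomp a
      exact ⟨⟨⟨x, hx⟩, ⟨y, hy⟩⟩, rfl⟩
    have hle : Nat.card A ≤ Nat.card (Sp × Sq) := Nat.card_le_card_of_surjective _ hsurj
    rw [Nat.card_prod, hSqcard, hcardA] at hle
    have hple : p ^ 2 ≤ Nat.card Sp := Nat.le_of_mul_le_mul_right hle (by omega)
    exact le_antisymm (Nat.le_of_dvd (by positivity) hSpdvd) hple
  -- symm of lambda preserves S
  have lam_symm_mem : ∀ a x : A, x ∈ S → (lamE Br a).symm x ∈ S := by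
    rintro a x ⟨n, hn⟩
    exact ⟨n, by rw [← map_nsmul, hn, map_zero]⟩
  -- Socle property
  have soc : ∀ a : A, a ∈ S → ∀ b : A, Br.mul a b = 0 := by
    intro a haS
    have horder : orderOf (adjOf Br a) ∣ q := by
      have h := Subgroup.orderOf_dvd_natCard Nq (show adjOf Br a ∈ Nq from haS)
      rwa [hNqcard] at h
    have hapow : (adjOf Br a) ^ q = 1 := orderOf_dvd_iff_pow_eq_one.mp horder
    have hiter : ∀ x : A, (⇑(lamE Br a))^[q] x = x := by
      intro x
      have h := lamE_pow Br (adjOf Br a) q x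
      rw [hapow] at h
      calc (⇑(lamE Br a))^[q] x = (⇑(lamE Br (adjOf Br a)))^[q] x := rfl
        _ = x := by
            rw [← h]
            show lamE Br ((0 : A)) x = x
            rw [lamE_apply, zmul, zero_add]
    -- generic fixed-point machinery
    have fix_all : ∀ T : AddSubgroup A, (∀ x, x ∈ T ↔ lamE Br a x ∈ T) →
        (∀ d : ℕ, d ∣ Nat.card T → Nat.card T ≡ d [MOD q] → d = Nat.card T) →
        ∀ x ∈ T, lamE Br a x = x := by
      intro T hT hcases
      let σT : ↥T ≃ ↥T := (lamE Br a).toEquiv.subtypeEquiv hT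
      have hσcoe : ∀ x : ↥T, (σT x : A) = lamE Br a (x : A) := fun x => rfl
      have hval : ∀ (n : ℕ) (x : ↥T), ((σT^[n] x : ↥T) : A) = (⇑(lamE Br a))^[n] (x : A) := by
        intro n
        induction n with
        | zero => intro x; rfl
        | succ n ih =>
            intro x
            rw [Function.iterate_succ_apply', Function.iterate_succ_apply', hσcoe, ih]
      have hσq : ∀ x : ↥T, σT^[q] x = x := fun x => Subtype.ext (by rw [hval, hiter])
      have hmod := count_fixed hq σT hσq
      let F : AddSubgroup ↥T :=
        { carrier := {x : ↥T | lamE Br a (x : A) = (x : A)}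
          zero_mem' := by
            show lamE Br a ((0 : ↥T) : A) = ((0 : ↥T) : A)
            rw [AddSubgroup.coe_zero, map_zero]
          add_mem' := by
            intro x y hx hy
            show lamE Br a ((x + y : ↥T) : A) = ((x + y : ↥T) : A)
            rw [AddSubgroup.coe_add, map_add]
            rw [show lamE Br a (x : A) = (x : A) from hx, show lamE Br a (y : A) = (y : A) from hy]
          neg_mem' := by
            intro x hx
            show lamE Br a ((-x : ↥T) : A) = ((-x : ↥T) : A)
            rw [AddSubgroup.coe_neg, map_neg]
            rw [show lamE Br a (x : A) = (x : A) from hx] }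
      have hFequiv : Nat.card {x : ↥T // σT x = x} = Nat.card F :=
        Nat.card_congr (Equiv.subtypeEquivRight (fun x => by
          constructor
          · intro h
            show lamE Br a (x : A) = (x : A)
            rw [← hσcoe x, h]
          · intro h
            exact Subtype.ext (by rw [hσcoe x]; exact h)))
      have hFdvd : Nat.card F ∣ Nat.card T := AddSubgroup.card_addSubgroup_dvd_card F
      have hmod2 : Nat.card T ≡ Nat.card F [MOD q] := by rw [← hFequiv]; exact hmod
      have hFeq : Nat.card F = Nat.card T := hcases _ hFdvd hmod2
      have hFtop : F = ⊤ := AddSubgroup.eq_top_of_card_eq F hFeq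
      intro x hx
      have hmem : (⟨x, hx⟩ : ↥T) ∈ F := by rw [hFtop]; trivial
      exact hmem
    have hqz : Prime (q : ℤ) := Nat.prime_iff_prime_int.mp hq
    -- lamE a fixes Sp pointwise
    have hfixSp : ∀ x ∈ Sp, lamE Br a x = x := by
      apply fix_all
      · intro x
        constructor
        · intro hx
          show p ^ 2 • lamE Br a x = 0
          rw [← map_nsmul, show p ^ 2 • x = 0 from hx, map_zero]
        · intro hx
          show p ^ 2 • x = 0
          apply (lamE Br a).injective
          rw [map_nsmul, map_zero]
          exact hx
      · intro d hdvd hmodi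
        rw [hSpcard] at hdvd hmodi ⊢
        obtain ⟨i, hi2, rfl⟩ := (Nat.dvd_prime_pow hp).mp hdvd
        have hdvd2 : (q : ℤ) ∣ (p : ℤ) ^ 2 - (p : ℤ) ^ i := by
          have h := (Nat.ModEq.dvd hmodi.symm)
          push_cast at h
          exact h
        have hp2' : (2 : ℤ) ≤ (p : ℤ) := by exact_mod_cast hp.two_le
        interval_cases i
        · exfalso
          rw [show ((p : ℤ) ^ 2 - (p : ℤ) ^ 0) = ((p : ℤ) + 1) * ((p : ℤ) - 1) by ring] at hdvd2
          rcases (hqz.dvd_mul).mp hdvd2 with h' | h'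
          · have hle := Int.le_of_dvd (by omega) h'
            have : q ≤ p + 1 := by exact_mod_cast hle
            omega
          · have hle := Int.le_of_dvd (by omega) h'
            have hcast : (q : ℤ) ≤ (p : ℤ) - 1 := hle
            have : (q : ℤ) ≤ (p : ℤ) + 1 := by omega
            have : q ≤ p + 1 := by exact_mod_cast this
            omega
        · exfalso
          rw [show ((p : ℤ) ^ 2 - (p : ℤ) ^ 1) = (p : ℤ) * ((p : ℤ) - 1) by ring] at hdvd2
          rcases (hqz.dvd_mul).mp hdvd2 with h' | h'
          · have hle := Int.le_of_dvd (by omega) h'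
            have : q ≤ p := by exact_mod_cast hle
            omega
          · have hle := Int.le_of_dvd (by omega) h'
            have : (q : ℤ) ≤ (p : ℤ) + 1 := by omega
            have : q ≤ p + 1 := by exact_mod_cast this
            omega
        · rfl
    -- lamE a fixes Sq pointwise
    have hfixSq : ∀ x ∈ Sq, lamE Br a x = x := by
      apply fix_all
      · intro x
        constructor
        · intro hx
          exact lam_mem a x hx
        · intro hx
          have h1 := lam_symm_mem a _ hx
          rwa [AddEquiv.symm_apply_apply] at h1
      · intro d hdvd hmodi
        rw [hSqcard] at hdvd hmodi ⊢
        rcases (Nat.dvd_prime hq).mp hdvd with rfl | rfl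
        · exfalso
          have hd2 : q ∣ q - 1 := (Nat.modEq_iff_dvd' (by omega)).mp hmodi.symm
          have := Nat.le_of_dvd (by omega) hd2
          omega
        · rfl
    intro b
    obtain ⟨x, hx, y, hy, rfl⟩ := hdecomp b
    have h1 : lamE Br a (x + y) = x + y := by
      rw [map_add, hfixSp x hx, hfixSq y hy]
    rw [lamE_apply] at h1
    have h2 : Br.mul a (x + y) + (x + y) = 0 + (x + y) := by rw [zero_add]; exact h1
    exact add_right_cancel h2
  -- Nq is normal in the adjoint group
  haveI hNorm : Nq.Normal := by
    constructor
    intro n hn g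
    have hc : lamE Br g n ∈ S := lam_mem g n hn
    have h1 : g * n = adjOf Br (lamE Br g n) * g := by
      rw [adj_mul_def, adj_mul_def]
      show op Br g n = op Br (lamE Br g n) g
      unfold op
      erw [soc _ hc g, lamE_apply]
      abel
    rw [h1, mul_assoc, mul_inv_cancel, mul_one]
    exact hc
  refine ⟨fun a ha b => soc a ha b, hScard, ?_, ?_⟩
  · -- uniqueness of the Sylow q-subgroup
    intro H h0 hcl hHq
    let H' : Subgroup (Adj Br) :=
      { carrier := H
        one_mem' := h0
        mul_mem' := by
          intro x y hx hy
          show op Br x y ∈ H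
          exact hcl x hx y hy
        inv_mem' := by
          intro x hx
          have hfin : H.Finite := Set.toFinite H
          have hmaps : Set.MapsTo (fun z : A => op Br x z) H H := fun z hz => hcl x hx z hz
          have hinj : Set.InjOn (fun z : A => op Br x z) H := by
            intro z1 _ z2 _ hzz
            have h12 : (adjOf Br x) * (adjOf Br z1) = (adjOf Br x) * (adjOf Br z2) := hzz
            have h13 := mul_left_cancel h12
            exact h13
          have hbij := (hfin.injOn_iff_bijOn_of_mapsTo hmaps).mp hinj
          obtain ⟨z, hzH, hz0⟩ := hbij.surjOn h0
          show rinv Br x ∈ H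
          have hxinv : (adjOf Br x)⁻¹ = adjOf Br z :=
            inv_eq_of_mul_eq_one_right (show adjOf Br x * adjOf Br z = 1 from hz0)
          rw [show rinv Br x = (adjOf Br x)⁻¹ from rfl, hxinv]
          exact hzH }
    have hH'card : Nat.card H' = q := by
      rw [← hHq]
      exact Nat.card_congr ⟨fun x => ⟨x.1, x.2⟩, fun x => ⟨x.1, x.2⟩, fun _ => rfl, fun _ => rfl⟩
    have hquotcard : Nat.card (Adj Br ⧸ Nq) = p ^ 2 := by
      have h := Subgroup.card_eq_card_quotient_mul_card_subgroup Nq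
      rw [hNqcard, hcardAdj] at h
      exact Nat.eq_of_mul_eq_mul_right (show 0 < q by omega) h.symm
    have hsub : H ⊆ S := by
      intro x hx
      have hord : orderOf (adjOf Br x) ∣ q := by
        rw [← hH'card]
        exact Subgroup.orderOf_dvd_natCard H' hx
      have h1 : orderOf ((QuotientGroup.mk' Nq) (adjOf Br x)) ∣ q :=
        (orderOf_map_dvd (QuotientGroup.mk' Nq) (adjOf Br x)).trans hord
      have h2 : orderOf ((QuotientGroup.mk' Nq) (adjOf Br x)) ∣ p ^ 2 := by
        rw [← hquotcard]
        exact orderOf_dvd_natCard _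
      rcases (Nat.dvd_prime hq).mp h1 with h | h
      · have h3 := orderOf_eq_one_iff.mp h
        exact (QuotientGroup.eq_one_iff (adjOf Br x)).mp h3
      · exfalso
        rw [h] at h2
        have h3 := hq.dvd_of_dvd_pow h2
        have := Nat.le_of_dvd (by omega) h3
        omega
    apply Set.eq_of_subset_of_ncard_le hsub ?_ (Set.toFinite S)
    rw [← Nat.card_coe_set_eq, ← Nat.card_coe_set_eq, hScard, hHq]
  · -- normality, concretely
    intro a b hb
    refine ⟨lamE Br a b, lam_mem a b hb, ?_⟩
    rw [soc (lamE Br a b) (lam_mem a b hb) a, lamE_apply]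
    abel
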